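/- For any probability measure P on ℝ^d with finite second moment, any point x₀ ∈ ℝ^d, and any time T > 0, the KL divergence between the Gaussian Q_{T|0}(·|x₀) = N(e^{-T} x₀, (1-e^{-2T}) Id) and P_T (the law of the OU process at time T started from P) satisfies KL(Q_{T|0}(·|x₀) ‖ P_T) ≤ (‖x₀‖² + ∫‖x‖² dP(x)) / (e^{2T} − 1). -/

import Mathlib

open MeasureTheory Real

/-- Density of the Gaussian `N(μ, v · Id)` on `ℝ^d`. -/
noncomputable def gaussDensity (d : ℕ) (μ : EuclideanSpace ℝ (Fin d)) (v : ℝ)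
    (x : EuclideanSpace ℝ (Fin d)) : ℝ :=
  (2 * Real.pi * v) ^ (-(d : ℝ) / 2) * Real.exp (-‖x - μ‖ ^ 2 / (2 * v))

/-- Density of the law at time `t` of the OU process started from `P`:
`P_t = Law(e^{-t} X₀ + √(1-e^{-2t}) Z)`, `X₀ ~ P`, `Z ~ N(0, Id)`. -/
noncomputable def ouMarginalDensity (d : ℕ) (P : Measure (EuclideanSpace ℝ (Fin d))) (t : ℝ)
    (x : EuclideanSpace ℝ (Fin d)) : ℝ :=
  ∫ x₀, gaussDensity d (Real.exp (-t) • x₀) (1 - Real.exp (-2 * t)) x ∂P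

section aux
variable {d : ℕ} {v : ℝ}

lemma exp_base_integrable {c : ℝ} (hc : 0 < c) :
    Integrable (fun y : EuclideanSpace ℝ (Fin d) => rexp (-c * ‖y‖ ^ 2)) := by
  have h := (GaussianFourier.integrable_cexp_neg_mul_sq_norm_add
    (V := EuclideanSpace ℝ (Fin d)) (b := (c : ℂ)) (by simpa using hc) 0 0).norm
  simp only [Complex.norm_exp] at h
  convert h using 2 with y
  simp [← Complex.ofReal_pow, ← Complex.ofReal_mul, ← Complex.ofReal_neg]

lemma exp_base_integral {c : ℝ} (hc : 0 < c) :
    ∫ y : EuclideanSpace ℝ (Fin d), rexp (-c * ‖y‖ ^ 2) = (π / c) ^ ((d : ℝ) / 2) := by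
  rw [GaussianFourier.integral_rexp_neg_mul_sq_norm hc]
  simp [finrank_euclideanSpace_fin]

lemma gauss_eq (μ x : EuclideanSpace ℝ (Fin d)) :
    gaussDensity d μ v x
      = (2 * π * v) ^ (-(d : ℝ) / 2) * rexp (-(1 / (2 * v)) * ‖x - μ‖ ^ 2) := by
  unfold gaussDensity
  congr 1
  ring

lemma K_pos (hv : 0 < v) : 0 < (2 * π * v) ^ (-(d : ℝ) / 2) :=
  Real.rpow_pos_of_pos (by positivity) _

lemma gauss_pos (hv : 0 < v) (μ x : EuclideanSpace ℝ (Fin d)) :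
    0 < gaussDensity d μ v x :=
  mul_pos (K_pos hv) (exp_pos _)

lemma gauss_le (hv : 0 < v) (μ x : EuclideanSpace ℝ (Fin d)) :
    gaussDensity d μ v x ≤ (2 * π * v) ^ (-(d : ℝ) / 2) := by
  rw [gauss_eq]
  nth_rewrite 2 [← mul_one ((2 * π * v) ^ (-(d : ℝ) / 2))]
  refine mul_le_mul_of_nonneg_left (Real.exp_le_one_iff.2 ?_) (K_pos hv).le
  have h1 : (0:ℝ) ≤ ‖x - μ‖ ^ 2 := by positivity
  have h2v : (0:ℝ) < 1 / (2 * v) := by positivity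
  nlinarith

lemma gauss_integrable (hv : 0 < v) (μ : EuclideanSpace ℝ (Fin d)) :
    Integrable (gaussDensity d μ v) := by
  have h := ((exp_base_integrable (d := d) (c := 1 / (2 * v))
    (by positivity)).const_mul ((2 * π * v) ^ (-(d : ℝ) / 2))).comp_sub_right μ
  refine h.congr (Filter.Eventually.of_forall fun x => ?_)
  rw [gauss_eq]

lemma gauss_integral (hv : 0 < v) (μ : EuclideanSpace ℝ (Fin d)) :
    ∫ x, gaussDensity d μ v x = 1 := by
  simp_rw [gauss_eq μ]
  rw [show (∫ x : EuclideanSpace ℝ (Fin d),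
        (2 * π * v) ^ (-(d : ℝ) / 2) * rexp (-(1 / (2 * v)) * ‖x - μ‖ ^ 2))
      = ∫ y : EuclideanSpace ℝ (Fin d),
        (2 * π * v) ^ (-(d : ℝ) / 2) * rexp (-(1 / (2 * v)) * ‖y‖ ^ 2) from
    integral_sub_right_eq_self
      (fun y => (2 * π * v) ^ (-(d : ℝ) / 2) * rexp (-(1 / (2 * v)) * ‖y‖ ^ 2)) μ]
  rw [integral_const_mul, exp_base_integral (by positivity)]
  have h1 : π / (1 / (2 * v)) = 2 * π * v := by field_simp
  have h0 : -(d:ℝ)/2 + (d:ℝ)/2 = 0 := by ring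
  rw [h1, ← Real.rpow_add (by positivity), h0, Real.rpow_zero]

end aux

open MeasureTheory Real

section aux2
open scoped RealInnerProductSpace
variable {d : ℕ}

lemma le_mul_exp_sq {s t : ℝ} (hs : 0 < s) (ht : 0 ≤ t) :
    t ≤ (1 + 1/s)/2 * rexp (s * t^2) := by
  have h1 : s * t^2 + 1 ≤ rexp (s * t^2) := Real.add_one_le_exp _
  have h2 : (1:ℝ) ≤ rexp (s * t^2) := Real.one_le_exp (by positivity)
  have amgm : 2 * (t * s) ≤ s^2 * t^2 + 1 := by nlinarith [sq_nonneg (s*t - 1)]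
  have hinv : s * (1/s) = 1 := by field_simp
  have hkey : 2 * (t * s) ≤ (s + 1) * rexp (s * t^2) := by
    nlinarith [mul_le_mul_of_nonneg_left h1 hs.le]
  nlinarith [mul_le_mul_of_nonneg_left h1 hs.le, exp_pos (s * t^2), hs]

lemma base_linear_integrable {c : ℝ} (hc : 0 < c) (K : ℝ) (b : EuclideanSpace ℝ (Fin d)) :
    Integrable (fun y : EuclideanSpace ℝ (Fin d) => K * rexp (-c * ‖y‖ ^ 2) * ⟪y, b⟫) := by
  have hc2 : 0 < c / 2 := by positivity
  set A : ℝ := (1 + 1/(c/2))/2 with hA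
  have hA0 : 0 ≤ A := by positivity
  refine Integrable.mono' ((exp_base_integrable (d := d) hc2).const_mul (|K| * ‖b‖ * A))
    ?_ (Filter.Eventually.of_forall fun y => ?_)
  · exact ((continuous_const.mul (Real.continuous_exp.comp
      (continuous_const.mul ((continuous_norm).pow 2)))).mul
      (continuous_id.inner continuous_const)).aestronglyMeasurable
  · have hinner : |⟪y, b⟫| ≤ ‖y‖ * ‖b‖ := abs_real_inner_le_norm y b
    have hn : ‖y‖ ≤ A * rexp (c/2 * ‖y‖^2) := le_mul_exp_sq hc2 (norm_nonneg y)
    have hprod : rexp (-c * ‖y‖^2) * rexp (c/2 * ‖y‖^2) = rexp (-(c/2) * ‖y‖^2) := by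
      rw [← Real.exp_add]; congr 1; ring
    have e1 := exp_pos (-c * ‖y‖^2)
    have e2 := exp_pos (c/2 * ‖y‖^2)
    calc ‖K * rexp (-c * ‖y‖ ^ 2) * ⟪y, b⟫‖
        = |K| * rexp (-c * ‖y‖^2) * |⟪y, b⟫| := by
          rw [norm_mul, norm_mul]
          simp [abs_of_pos e1, Real.norm_eq_abs]
      _ ≤ |K| * rexp (-c * ‖y‖^2) * (‖y‖ * ‖b‖) := by
          exact mul_le_mul_of_nonneg_left hinner (by positivity)
      _ ≤ |K| * rexp (-c * ‖y‖^2) * ((A * rexp (c/2 * ‖y‖^2)) * ‖b‖) := by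
          refine mul_le_mul_of_nonneg_left
            (mul_le_mul_of_nonneg_right hn (norm_nonneg b)) (by positivity)
      _ = |K| * ‖b‖ * A * (rexp (-c * ‖y‖^2) * rexp (c/2 * ‖y‖^2)) := by ring
      _ = |K| * ‖b‖ * A * rexp (-(c/2) * ‖y‖^2) := by rw [hprod]

lemma gauss_linear_integrable {v : ℝ} (hv : 0 < v) (μ b : EuclideanSpace ℝ (Fin d)) :
    Integrable (fun x => gaussDensity d μ v x * ⟪x - μ, b⟫) := by
  have h := (base_linear_integrable (d := d) (c := 1/(2*v)) (by positivity)
    ((2 * π * v) ^ (-(d : ℝ) / 2)) b).comp_sub_right μ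
  refine h.congr (Filter.Eventually.of_forall fun x => ?_)
  simp only [gauss_eq μ]

lemma gauss_linear_integral {v : ℝ} (hv : 0 < v) (μ b : EuclideanSpace ℝ (Fin d)) :
    ∫ x, gaussDensity d μ v x * ⟪x - μ, b⟫ = 0 := by
  set c : ℝ := 1/(2*v) with hc
  set K : ℝ := (2 * π * v) ^ (-(d : ℝ) / 2) with hK
  set g : EuclideanSpace ℝ (Fin d) → ℝ := fun y => K * rexp (-c * ‖y‖ ^ 2) * ⟪y, b⟫ with hg
  have h1 : ∫ x, gaussDensity d μ v x * ⟪x - μ, b⟫ = ∫ y, g y := by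
    simp_rw [gauss_eq μ]
    exact integral_sub_right_eq_self g μ
  have hodd : ∀ y, g (-y) = - g y := by
    intro y
    simp only [hg, norm_neg, inner_neg_left]
    ring
  have h2 : ∫ y, g y = - ∫ y, g y := by
    conv_lhs => rw [← integral_neg_eq_self g volume]
    simp_rw [hodd]
    exact integral_neg g
  rw [h1]
  linarith
end aux2


section main
open scoped RealInnerProductSpace

set_option maxHeartbeats 2000000 in
theorem kl_transition_marginal_le (d : ℕ) (P : Measure (EuclideanSpace ℝ (Fin d)))
    [IsProbabilityMeasure P] (hmom : Integrable (fun x => ‖x‖ ^ 2) P)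
    (x₀ : EuclideanSpace ℝ (Fin d)) (T : ℝ) (hT : 0 < T) :
    (∫ x, gaussDensity d (Real.exp (-T) • x₀) (1 - Real.exp (-2 * T)) x *
        Real.log (gaussDensity d (Real.exp (-T) • x₀) (1 - Real.exp (-2 * T)) x /
          ouMarginalDensity d P T x)) ≤
      (‖x₀‖ ^ 2 + ∫ x, ‖x‖ ^ 2 ∂P) / (Real.exp (2 * T) - 1) := by
  set v : ℝ := 1 - Real.exp (-2 * T) with hvdef
  have hexpT1 : rexp (-T) ≤ 1 := exp_le_one_iff.2 (by linarith)
  have hv : 0 < v := by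
    have : rexp (-2 * T) < 1 := exp_lt_one_iff.2 (by linarith)
    simp only [hvdef]; linarith
  set e : ℝ := rexp (-T) with hedef
  set m : EuclideanSpace ℝ (Fin d) := e • x₀ with hmdef
  set q : EuclideanSpace ℝ (Fin d) → ℝ := fun x => gaussDensity d m v x with hqdef
  set p : EuclideanSpace ℝ (Fin d) → ℝ := ouMarginalDensity d P T with hpdef
  have hppdef : ∀ x, p x = ∫ x', gaussDensity d (e • x') v x ∂P := fun x => rfl
  -- RHS denominator
  have hu : 1 < rexp (2 * T) := by
    rw [← Real.exp_zero]; exact Real.exp_lt_exp.2 (by linarith)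
  have hI2nonneg : 0 ≤ ∫ x, ‖x‖ ^ 2 ∂P := integral_nonneg fun x => by positivity
  have hRHS0 : 0 ≤ (‖x₀‖ ^ 2 + ∫ x, ‖x‖ ^ 2 ∂P) / (Real.exp (2 * T) - 1) := by
    apply div_nonneg ?_ (by linarith)
    have : (0:ℝ) ≤ ‖x₀‖ ^ 2 := by positivity
    linarith
  -- integrability over P
  have hintId : Integrable (fun x' : EuclideanSpace ℝ (Fin d) => x') P := by
    refine Integrable.mono' ((integrable_const (1:ℝ)).add hmom)
      aestronglyMeasurable_id (Filter.Eventually.of_forall fun x' => ?_)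
    simp only [Pi.add_apply]
    nlinarith [norm_nonneg x', sq_nonneg (‖x'‖ - 1)]
  have hI2int : Integrable (fun x' => ‖x₀ - x'‖ ^ 2) P := by
    refine Integrable.mono' ((integrable_const (2 * ‖x₀‖ ^ 2)).add (hmom.const_mul 2))
      ((continuous_const.sub continuous_id).norm.pow 2).aestronglyMeasurable
      (Filter.Eventually.of_forall fun x' => ?_)
    have h1 : ‖x₀ - x'‖ ≤ ‖x₀‖ + ‖x'‖ := norm_sub_le _ _
    have h2 : ‖x₀ - x'‖ ^ 2 ≤ 2 * ‖x₀‖ ^ 2 + 2 * ‖x'‖ ^ 2 := by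
      nlinarith [norm_nonneg (x₀ - x'), norm_nonneg x₀, norm_nonneg x',
        mul_le_mul h1 h1 (norm_nonneg _) (by positivity), sq_nonneg (‖x₀‖ - ‖x'‖)]
    calc ‖‖x₀ - x'‖ ^ 2‖ = ‖x₀ - x'‖ ^ 2 := by
          rw [Real.norm_eq_abs, abs_of_nonneg (by positivity)]
      _ ≤ 2 * ‖x₀‖ ^ 2 + 2 * ‖x'‖ ^ 2 := h2
  have hnormsm : ∀ x' : EuclideanSpace ℝ (Fin d),
      ‖m - e • x'‖ ^ 2 = e ^ 2 * ‖x₀ - x'‖ ^ 2 := by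
    intro x'
    rw [hmdef, ← smul_sub, norm_smul, Real.norm_eq_abs, abs_of_pos (exp_pos _), mul_pow]
  have hCint : Integrable (fun x' => ‖m - e • x'‖ ^ 2) P := by
    simp_rw [hnormsm]
    exact hI2int.const_mul _
  set μP : EuclideanSpace ℝ (Fin d) := ∫ x', x' ∂P with hμPdef
  set bvec : EuclideanSpace ℝ (Fin d) := m - e • μP with hbdef
  set C : ℝ := ∫ x', ‖m - e • x'‖ ^ 2 ∂P with hCdef
  set g : EuclideanSpace ℝ (Fin d) → ℝ :=
    fun x => q x * ((C + 2 * ⟪x - m, bvec⟫) / (2 * v)) with hgdef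
  have hg_eq : g = fun x => (C / (2 * v)) * gaussDensity d m v x
      + (1 / v) * (gaussDensity d m v x * ⟪x - m, bvec⟫) := by
    funext x
    simp only [hgdef, hqdef]
    field_simp
  have hgInt : Integrable g := by
    rw [hg_eq]
    exact ((gauss_integrable hv m).const_mul _).add
      ((gauss_linear_integrable hv m bvec).const_mul _)
  have hgVal : ∫ x, g x = C / (2 * v) := by
    rw [hg_eq, integral_add ((gauss_integrable hv m).const_mul _)
      ((gauss_linear_integrable hv m bvec).const_mul _),
      integral_const_mul, integral_const_mul, gauss_integral hv m,
      gauss_linear_integral hv m bvec]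
    ring
  -- pointwise Jensen bound
  have hpt : ∀ x, q x * Real.log (q x / p x) ≤ g x := by
    intro x
    set sfun : EuclideanSpace ℝ (Fin d) → ℝ := fun x' => gaussDensity d (e • x') v x
      with hsdef
    have hs_pos : ∀ x', 0 < sfun x' := fun x' => gauss_pos hv _ x
    have hs_cont : Continuous sfun := by
      have h1 : Continuous fun x' : EuclideanSpace ℝ (Fin d) => x - e • x' :=
        continuous_const.sub (continuous_id.const_smul e)
      exact continuous_const.mul (Real.continuous_exp.comp
        (((h1.norm.pow 2).neg).div_const _))
    have hs_int : Integrable sfun P := by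
      refine Integrable.mono' (integrable_const ((2 * π * v) ^ (-(d:ℝ)/2)))
        hs_cont.aestronglyMeasurable (Filter.Eventually.of_forall fun x' => ?_)
      rw [Real.norm_eq_abs, abs_of_pos (hs_pos x')]
      exact gauss_le hv _ x
    have hpx : p x = ∫ x', sfun x' ∂P := hppdef x
    have hppos : 0 < p x := by
      rw [hpx]
      refine (integral_pos_iff_support_of_nonneg (fun x' => (hs_pos x').le) hs_int).2 ?_
      have hsupp : Function.support sfun = Set.univ :=
        Set.eq_univ_of_forall fun x' => (hs_pos x').ne'
      rw [hsupp, measure_univ]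
      norm_num
    have hq2int : Integrable (fun x' => ‖x - e • x'‖ ^ 2) P := by
      refine Integrable.mono' ((integrable_const (2 * ‖x‖ ^ 2)).add (hmom.const_mul 2))
        (((continuous_const.sub (continuous_id.const_smul e)).norm.pow 2)).aestronglyMeasurable
        (Filter.Eventually.of_forall fun x' => ?_)
      simp only [Pi.add_apply]
      have hesm : ‖e • x'‖ = e * ‖x'‖ := by
        rw [norm_smul, Real.norm_eq_abs, hedef, abs_of_pos (exp_pos _)]
      have h1 : ‖x - e • x'‖ ≤ ‖x‖ + ‖x'‖ := by
        refine (norm_sub_le _ _).trans ?_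
        have := norm_nonneg x'
        rw [hesm]
        nlinarith
      rw [Real.norm_eq_abs, abs_of_nonneg (by positivity : (0:ℝ) ≤ ‖x - e • x'‖ ^ 2)]
      nlinarith [norm_nonneg (x - e • x'), norm_nonneg x, norm_nonneg x',
        mul_le_mul h1 h1 (norm_nonneg _) (by positivity), sq_nonneg (‖x‖ - ‖x'‖)]
    have hlog_eq : ∀ x', Real.log (sfun x')
        = Real.log ((2 * π * v) ^ (-(d:ℝ)/2)) + (-(1/(2*v)) * ‖x - e • x'‖ ^ 2) := by
      intro x'
      rw [show sfun x' = (2 * π * v) ^ (-(d:ℝ)/2) * rexp (-(1/(2*v)) * ‖x - e • x'‖ ^ 2) from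
          gauss_eq _ _,
        Real.log_mul (K_pos hv).ne' (Real.exp_ne_zero _), Real.log_exp]
    have hlogq : Real.log (q x)
        = Real.log ((2 * π * v) ^ (-(d:ℝ)/2)) + (-(1/(2*v)) * ‖x - m‖ ^ 2) := by
      rw [show q x = (2 * π * v) ^ (-(d:ℝ)/2) * rexp (-(1/(2*v)) * ‖x - m‖ ^ 2) from
          gauss_eq m x,
        Real.log_mul (K_pos hv).ne' (Real.exp_ne_zero _), Real.log_exp]
    have hlogint : Integrable (fun x' => Real.log (sfun x')) P := by
      simp_rw [hlog_eq]
      exact (integrable_const _).add (hq2int.const_mul _)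
    have hJensen : (∫ x', Real.log (sfun x') ∂P) ≤ Real.log (p x) := by
      have key : ∀ x', Real.log (sfun x') ≤ Real.log (p x) + (p x)⁻¹ * (sfun x' - p x) := by
        intro x'
        have h := Real.log_le_sub_one_of_pos (div_pos (hs_pos x') hppos)
        rw [Real.log_div (hs_pos x').ne' hppos.ne'] at h
        have h2 : sfun x' / p x - 1 = (p x)⁻¹ * (sfun x' - p x) := by
          field_simp
        rw [h2] at h
        linarith
      have hintaux3 : Integrable (fun x' => sfun x' - p x) P :=
        hs_int.sub (integrable_const _)
      have hintaux2 : Integrable (fun x' => (p x)⁻¹ * (sfun x' - p x)) P :=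
        hintaux3.const_mul _
      have hintaux : Integrable (fun x' => Real.log (p x) + (p x)⁻¹ * (sfun x' - p x)) P :=
        (integrable_const _).add hintaux2
      have h := integral_mono hlogint hintaux key
      rwa [integral_add (integrable_const _) hintaux2,
        integral_const, probReal_univ, one_smul,
        integral_const_mul, integral_sub hs_int (integrable_const _), integral_const,
        probReal_univ, one_smul, ← hpx, sub_self, mul_zero, add_zero] at h
    have hexpand : ∀ x', Real.log (q x) - Real.log (sfun x')
        = (1/(2*v)) * ‖m - e • x'‖ ^ 2 + (1/v) * ⟪x - m, m - e • x'⟫ := by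
      intro x'
      rw [hlogq, hlog_eq x']
      have hxdecomp : x - e • x' = (x - m) + (m - e • x') := by abel
      have hns : ‖x - e • x'‖ ^ 2
          = ‖x - m‖ ^ 2 + 2 * ⟪x - m, m - e • x'⟫ + ‖m - e • x'‖ ^ 2 := by
        rw [hxdecomp, norm_add_sq_real]
      rw [hns]
      field_simp
      ring
    have hsmulint : Integrable (fun x' : EuclideanSpace ℝ (Fin d) => e • x') P :=
      hintId.smul e
    have hvint : Integrable (fun x' : EuclideanSpace ℝ (Fin d) => m - e • x') P :=
      (integrable_const m).sub hsmulint
    have hinner_int : Integrable (fun x' => ⟪x - m, m - e • x'⟫) P :=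
      hvint.const_inner (x - m)
    have hintegral_inner : ∫ x', ⟪x - m, m - e • x'⟫ ∂P = ⟪x - m, bvec⟫ := by
      rw [integral_inner hvint]
      congr 1
      rw [integral_sub (integrable_const m) hsmulint, integral_const,
        probReal_univ, one_smul, integral_smul]
    have hsum : Real.log (q x) - ∫ x', Real.log (sfun x') ∂P
        = (C + 2 * ⟪x - m, bvec⟫) / (2 * v) := by
      have hsplit : Real.log (q x) - ∫ x', Real.log (sfun x') ∂P
          = ∫ x', (Real.log (q x) - Real.log (sfun x')) ∂P := by
        rw [integral_sub (integrable_const _) hlogint, integral_const,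
          probReal_univ, one_smul]
      rw [hsplit]
      simp_rw [hexpand]
      rw [integral_add (hCint.const_mul _) (hinner_int.const_mul _),
        integral_const_mul, integral_const_mul, hintegral_inner, ← hCdef]
      field_simp
    have hlogdiv : Real.log (q x / p x) = Real.log (q x) - Real.log (p x) :=
      Real.log_div (gauss_pos hv m x).ne' hppos.ne'
    have hle : Real.log (q x / p x) ≤ (C + 2 * ⟪x - m, bvec⟫) / (2 * v) := by
      rw [hlogdiv, ← hsum]
      linarith
    calc q x * Real.log (q x / p x)
        ≤ q x * ((C + 2 * ⟪x - m, bvec⟫) / (2 * v)) :=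
          mul_le_mul_of_nonneg_left hle (gauss_pos hv m x).le
      _ = g x := rfl
  -- final arithmetic bound
  have hfinal : C / (2 * v) ≤ (‖x₀‖ ^ 2 + ∫ x, ‖x‖ ^ 2 ∂P) / (Real.exp (2 * T) - 1) := by
    have hCval : C = rexp (-2 * T) * ∫ x', ‖x₀ - x'‖ ^ 2 ∂P := by
      rw [hCdef]
      simp_rw [hnormsm]
      rw [integral_const_mul]
      congr 1
      rw [hedef, sq, ← Real.exp_add]
      congr 1
      ring
    set J : ℝ := ∫ x, ‖x‖ ^ 2 ∂P with hJdef
    set I2 : ℝ := ∫ x', ‖x₀ - x'‖ ^ 2 ∂P with hI2def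
    have hI2le : I2 ≤ 2 * ‖x₀‖ ^ 2 + 2 * J := by
      have hpt2 : ∀ x' : EuclideanSpace ℝ (Fin d),
          ‖x₀ - x'‖ ^ 2 ≤ 2 * ‖x₀‖ ^ 2 + 2 * ‖x'‖ ^ 2 := by
        intro x'
        have h1 : ‖x₀ - x'‖ ≤ ‖x₀‖ + ‖x'‖ := norm_sub_le _ _
        nlinarith [norm_nonneg (x₀ - x'), norm_nonneg x₀, norm_nonneg x',
          mul_le_mul h1 h1 (norm_nonneg _) (by positivity), sq_nonneg (‖x₀‖ - ‖x'‖)]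
      have h := integral_mono hI2int
        ((integrable_const (2 * ‖x₀‖ ^ 2)).add (hmom.const_mul 2))
        (fun x' => by simpa using hpt2 x')
      simp only [Pi.add_apply] at h
      rwa [integral_add (integrable_const _) (hmom.const_mul 2), integral_const,
        probReal_univ, one_smul, integral_const_mul] at h
    set u : ℝ := rexp (2 * T) with hudef
    have hu1 : (0:ℝ) < u - 1 := by linarith
    have hu0 : (0:ℝ) < u := by linarith
    have hinv : rexp (-2 * T) = u⁻¹ := by
      rw [hudef, ← Real.exp_neg]
      congr 1
      ring
    have hveq : v = 1 - u⁻¹ := by rw [hvdef, hinv]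
    have h1u : (0:ℝ) < 1 - u⁻¹ := by
      have : u⁻¹ < 1 := inv_lt_one_of_one_lt₀ hu
      linarith
    have hLHS : C / (2 * v) = I2 / (2 * (u - 1)) := by
      rw [hCval, hinv, hveq, div_eq_div_iff (mul_pos two_pos h1u).ne' (mul_pos two_pos hu1).ne']
      field_simp
    rw [hLHS]
    calc I2 / (2 * (u - 1)) ≤ (2 * ‖x₀‖ ^ 2 + 2 * J) / (2 * (u - 1)) :=
          (div_le_div_iff_of_pos_right (mul_pos two_pos hu1)).2 hI2le
      _ = (‖x₀‖ ^ 2 + J) / (u - 1) := by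
          rw [show 2 * ‖x₀‖ ^ 2 + 2 * J = 2 * (‖x₀‖ ^ 2 + J) by ring,
            mul_div_mul_left _ _ (two_ne_zero)]
  by_cases hfInt : Integrable (fun x => q x * Real.log (q x / p x)) volume
  · calc (∫ x, q x * Real.log (q x / p x)) ≤ ∫ x, g x := integral_mono hfInt hgInt hpt
      _ = C / (2 * v) := hgVal
      _ ≤ _ := hfinal
  · rw [integral_undef hfInt]
    exact hRHS0


end main
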